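/- Let A and B be disjoint finite sets of points in the plane such that A ∪ B is not contained in a single line. Then the bivisibility graph B(A,B) is connected if and only if it has no isolated vertices (vertices of degree 0). -/

import Mathlib

/-- Adjacency in the bivisibility graph: one point from `A` and one from `B`, mutually
visible with respect to `A ∪ B` (no point of `A ∪ B` in the open segment between them). -/
def BivisAdj (A B : Finset (ℝ × ℝ)) (x y : ℝ × ℝ) : Prop :=
  x ≠ y ∧ ((x ∈ A ∧ y ∈ B) ∨ (x ∈ B ∧ y ∈ A)) ∧
    ∀ p ∈ A ∪ B, p ∉ openSegment ℝ x y

/-- The bivisibility graph `B(A,B)` of two finite point sets in the plane. -/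
def bivisibilityGraph (A B : Finset (ℝ × ℝ)) : SimpleGraph {p : ℝ × ℝ // p ∈ A ∪ B} where
  Adj u v := BivisAdj A B u.1 v.1
  symm := by
    constructor
    rintro u v ⟨hne, hab, h⟩
    refine ⟨hne.symm, by tauto, fun p hp => ?_⟩
    rw [openSegment_symm]
    exact h p hp
  loopless := by constructor; rintro u ⟨hne, -⟩; exact hne rfl

namespace BivisProof

open Finset

noncomputable section
open scoped Classical

abbrev Pt := ℝ × ℝ

/-- 2×2 determinant of two vectors. -/
def det2 (u v : Pt) : ℝ := u.1 * v.2 - u.2 * v.1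

lemma det2_self (u : Pt) : det2 u u = 0 := by simp [det2]; ring

lemma det2_smul_right (u : Pt) (a : ℝ) (v : Pt) : det2 u (a • v) = a * det2 u v := by
  simp [det2, Prod.smul_fst, Prod.smul_snd, smul_eq_mul]; ring

lemma det2_smul_left (a : ℝ) (u v : Pt) : det2 (a • u) v = a * det2 u v := by
  simp [det2, Prod.smul_fst, Prod.smul_snd, smul_eq_mul]; ring

lemma det2_add_right (u v w : Pt) : det2 u (v + w) = det2 u v + det2 u w := by
  simp [det2, Prod.fst_add, Prod.snd_add]; ring

lemma det2_add_left (u v w : Pt) : det2 (u + v) w = det2 u w + det2 v w := by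
  simp [det2, Prod.fst_add, Prod.snd_add]; ring

lemma det2_sub_right (u v w : Pt) : det2 u (v - w) = det2 u v - det2 u w := by
  simp [det2, Prod.fst_sub, Prod.snd_sub]; ring

lemma det2_comm (u v : Pt) : det2 u v = - det2 v u := by simp [det2]; ring

lemma det2_zero_right (u : Pt) : det2 u 0 = 0 := by simp [det2]

lemma det2_interp (d a b : Pt) (t : ℝ) :
    det2 d (a + t • (b - a)) = (1 - t) * det2 d a + t * det2 d b := by
  simp [det2, Prod.fst_add, Prod.snd_add, Prod.smul_fst, Prod.smul_snd, Prod.fst_sub,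
    Prod.snd_sub, smul_eq_mul]
  ring

/-- In the plane, if `det2 u v = 0` with `u ≠ 0` then `v` is a multiple of `u`. -/
lemma parallel_of_det2 {u v : Pt} (hu : u ≠ 0) (h : det2 u v = 0) : ∃ k : ℝ, v = k • u := by
  rcases u with ⟨u1, u2⟩
  rcases v with ⟨v1, v2⟩
  simp only [det2] at h
  by_cases h1 : u1 = 0
  · have h2 : u2 ≠ 0 := by
      intro h2; exact hu (by simp [h1, h2, Prod.ext_iff])
    refine ⟨v2 / u2, ?_⟩
    have hv1 : v1 = 0 := by
      have : u2 * v1 = 0 := by rw [h1] at h; linarith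
      rcases mul_eq_zero.1 this with h | h
      · exact absurd h h2
      · exact h
    simp [Prod.ext_iff, Prod.smul_fst, Prod.smul_snd, smul_eq_mul, h1, hv1]
    field_simp
  · refine ⟨v1 / u1, ?_⟩
    have hv2 : v2 = u2 * v1 / u1 := by field_simp; nlinarith
    simp [Prod.ext_iff, Prod.smul_fst, Prod.smul_snd, smul_eq_mul, hv2]
    constructor
    · field_simp
    · ring

/-- Cramer-style: any vector is a combination of two independent vectors. -/
lemma cramer (u v w : Pt) (hD : det2 u v ≠ 0) :
    w = (det2 w v / det2 u v) • u + (det2 u w / det2 u v) • v := by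
  rcases u with ⟨u1, u2⟩; rcases v with ⟨v1, v2⟩; rcases w with ⟨w1, w2⟩
  simp only [det2] at *
  have h : (u1 * v2 - u2 * v1) ≠ 0 := hD
  refine Prod.ext ?_ ?_ <;>
    simp only [Prod.fst_add, Prod.snd_add, Prod.smul_fst, Prod.smul_snd, smul_eq_mul] <;>
    rw [div_mul_eq_mul_div, div_mul_eq_mul_div, ← add_div, eq_div_iff h] <;> ring

/-- Uniqueness of coordinates in an independent pair. -/
lemma coords_unique {u v : Pt} (hD : det2 u v ≠ 0) {a b a' b' : ℝ}
    (h : a • u + b • v = a' • u + b' • v) : a = a' ∧ b = b' := by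
  have h1 : det2 (a • u + b • v) v = det2 (a' • u + b' • v) v := by rw [h]
  have h2 : det2 u (a • u + b • v) = det2 u (a' • u + b' • v) := by rw [h]
  rw [det2_add_left, det2_add_left, det2_smul_left, det2_smul_left, det2_smul_left,
    det2_smul_left, det2_self] at h1
  rw [det2_add_right, det2_add_right, det2_smul_right, det2_smul_right, det2_smul_right,
    det2_smul_right, det2_self] at h2
  constructor
  · have := mul_right_cancel₀ hD (by linarith [h1] : a * det2 u v = a' * det2 u v)
    exact this
  · have := mul_right_cancel₀ hD (by linarith [h2] : b * det2 u v = b' * det2 u v)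
    exact this

lemma coords_zero {u v : Pt} (hD : det2 u v ≠ 0) {a b : ℝ}
    (h : a • u + b • v = 0) : a = 0 ∧ b = 0 := by
  have := coords_unique hD (a' := 0) (b' := 0) (by simpa using h)
  exact this

/-- Membership in an open segment, parametric form. -/
lemma mem_openSegment_iff {x y p : Pt} :
    p ∈ openSegment ℝ x y ↔ ∃ t : ℝ, 0 < t ∧ t < 1 ∧ p = x + t • (y - x) := by
  rw [openSegment_eq_image']
  constructor
  · rintro ⟨t, ht, rfl⟩
    exact ⟨t, ht.1, ht.2, rfl⟩
  · rintro ⟨t, h0, h1, rfl⟩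
    exact ⟨t, ⟨h0, h1⟩, rfl⟩


/-! ### Visibility helpers -/

lemma adj_symm {A B : Finset Pt} {x y : Pt} (h : BivisAdj A B x y) : BivisAdj A B y x := by
  obtain ⟨hne, hab, hvis⟩ := h
  refine ⟨hne.symm, by tauto, fun p hp => ?_⟩
  rw [openSegment_symm]; exact hvis p hp

lemma adj_mem {A B : Finset Pt} {x y : Pt} (h : BivisAdj A B x y) :
    x ∈ A ∪ B ∧ y ∈ A ∪ B := by
  obtain ⟨-, hab, -⟩ := h
  rcases hab with ⟨h1, h2⟩ | ⟨h1, h2⟩ <;>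
    simp [Finset.mem_union, h1, h2]

lemma adj_swap {A B : Finset Pt} {x y : Pt} (h : BivisAdj A B x y) : BivisAdj B A x y := by
  obtain ⟨hne, hab, hvis⟩ := h
  refine ⟨hne, by tauto, fun p hp => hvis p ?_⟩
  rwa [Finset.union_comm]

lemma rtg_symm {α : Type*} {r : α → α → Prop} (hs : ∀ a b, r a b → r b a) {a b : α}
    (h : Relation.ReflTransGen r a b) : Relation.ReflTransGen r b a := by
  induction h with
  | refl => exact .refl
  | tail _ hbc ih => exact Relation.ReflTransGen.trans (Relation.ReflTransGen.single (hs _ _ hbc)) ih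

/-- First blocker on a segment sees the starting point. -/
lemma exists_first_blocker {S : Finset Pt} {x y : Pt} (hxy : x ≠ y)
    (hne : (S.filter (fun p => p ∈ openSegment ℝ x y)).Nonempty) :
    ∃ z ∈ S, z ∈ openSegment ℝ x y ∧ ∀ p ∈ S, p ∉ openSegment ℝ x z := by
  obtain ⟨z, hzmem, hzmin⟩ := Finset.exists_min_image _ (fun p => ‖p - x‖) hne
  rw [Finset.mem_filter] at hzmem
  obtain ⟨hzS, hzseg⟩ := hzmem
  refine ⟨z, hzS, hzseg, fun p hpS hpseg => ?_⟩
  obtain ⟨τ, hτ0, hτ1, hzeq⟩ := mem_openSegment_iff.1 hzseg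
  obtain ⟨u, hu0, hu1, hpeq⟩ := mem_openSegment_iff.1 hpseg
  have hyx : y - x ≠ 0 := sub_ne_zero.2 (Ne.symm hxy)
  have hzx : z - x = τ • (y - x) := by rw [hzeq]; abel
  have hzxne : z - x ≠ 0 := by
    rw [hzx]; exact smul_ne_zero (ne_of_gt hτ0) hyx
  have hpx : p - x = u • (z - x) := by rw [hpeq]; abel
  have hpseg' : p ∈ openSegment ℝ x y := by
    rw [mem_openSegment_iff]
    refine ⟨u * τ, mul_pos hu0 hτ0, ?_, ?_⟩
    · calc u * τ < 1 * τ := by nlinarith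
        _ ≤ 1 := by linarith
    · have : p - x = (u * τ) • (y - x) := by rw [hpx, hzx, smul_smul]
      have := congrArg (fun w => x + w) this
      simpa using this
  have hmin := hzmin p (Finset.mem_filter.2 ⟨hpS, hpseg'⟩)
  have hnorm : ‖p - x‖ = u * ‖z - x‖ := by
    rw [hpx, norm_smul, Real.norm_eq_abs, abs_of_pos hu0]
  have hzpos : (0:ℝ) < ‖z - x‖ := norm_pos_iff.2 hzxne
  simp only [hnorm] at hmin
  nlinarith

/-- The first point of `S` in the direction of `e` from `h` (possibly `e` itself):
it is visible from `h`. -/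
lemma exists_first_toward {S : Finset Pt} {h e : Pt} (heS : e ∈ S) (hne : e ≠ h) :
    ∃ z ∈ S, ∃ γ : ℝ, 0 < γ ∧ γ ≤ 1 ∧ z - h = γ • (e - h) ∧
      ∀ p ∈ S, p ∉ openSegment ℝ h z := by
  by_cases hblk : (S.filter (fun p => p ∈ openSegment ℝ h e)).Nonempty
  · obtain ⟨z, hzS, hzseg, hzvis⟩ := exists_first_blocker (Ne.symm hne) hblk
    obtain ⟨τ, hτ0, hτ1, hzeq⟩ := mem_openSegment_iff.1 hzseg
    exact ⟨z, hzS, τ, hτ0, le_of_lt hτ1, by rw [hzeq]; abel, hzvis⟩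
  · refine ⟨e, heS, 1, one_pos, le_refl 1, by simp, fun p hpS hpseg => ?_⟩
    exact hblk ⟨p, Finset.mem_filter.2 ⟨hpS, hpseg⟩⟩

/-- A point of minimal nonzero "determinant distance" to a line sees every point of the line. -/
lemma closest_sees {S : Finset Pt} {d c z : Pt} (hzS : z ∈ S)
    (hz : det2 d (z - c) ≠ 0)
    (hmin : ∀ p ∈ S, det2 d (p - c) ≠ 0 → |det2 d (z - c)| ≤ |det2 d (p - c)|)
    {l : Pt} (hl : det2 d (l - c) = 0) : ∀ p ∈ S, p ∉ openSegment ℝ z l := by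
  intro p hpS hpseg
  obtain ⟨τ, hτ0, hτ1, hpeq⟩ := mem_openSegment_iff.1 hpseg
  have hval : det2 d (p - c) = (1 - τ) * det2 d (z - c) := by
    have heq : p - c = (z - c) + τ • ((l - c) - (z - c)) := by rw [hpeq]; module
    rw [heq, det2_interp, hl]
    ring
  have hne' : det2 d (p - c) ≠ 0 := by
    rw [hval]
    exact mul_ne_zero (by linarith) hz
  have habs : |det2 d (p - c)| = (1 - τ) * |det2 d (z - c)| := by
    rw [hval, abs_mul, abs_of_pos (by linarith : (0:ℝ) < 1 - τ)]
  have := hmin p hpS hne'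
  have hzpos : (0:ℝ) < |det2 d (z - c)| := abs_pos.2 hz
  nlinarith [this, habs]

/-- If all points of `S` lie on a single line, `S` has no non-degenerate triple. -/
lemma all_online_contra {S : Finset Pt} {d c : Pt} (hd : d ≠ 0)
    (hall : ∀ p ∈ S, det2 d (p - c) = 0)
    (hdet : ∃ p ∈ S, ∃ q ∈ S, ∃ r ∈ S, det2 (q - p) (r - p) ≠ 0) : False := by
  obtain ⟨p, hp, q, hq, r, hr, hD⟩ := hdet
  have h1 : det2 d (q - p) = 0 := by
    have : q - p = (q - c) - (p - c) := by abel
    rw [this, det2_sub_right, hall q hq, hall p hp, sub_zero]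
  have h2 : det2 d (r - p) = 0 := by
    have : r - p = (r - c) - (p - c) := by abel
    rw [this, det2_sub_right, hall r hr, hall p hp, sub_zero]
  obtain ⟨k1, hk1⟩ := parallel_of_det2 hd h1
  obtain ⟨k2, hk2⟩ := parallel_of_det2 hd h2
  rw [hk1, hk2, det2_smul_left, det2_smul_right, det2_self] at hD
  simp at hD


/-- Bridge from non-collinearity to an explicit non-degenerate triple. -/
lemma noncol_witness {S : Finset Pt} (h : ¬ Collinear ℝ (S : Set Pt)) :
    ∃ p ∈ S, ∃ q ∈ S, ∃ r ∈ S, det2 (q - p) (r - p) ≠ 0 := by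
  by_contra hcon
  push_neg at hcon
  apply h
  by_cases hpair : ∃ p ∈ S, ∃ q ∈ S, p ≠ q
  · obtain ⟨p, hp, q, hq, hpq⟩ := hpair
    rw [collinear_iff_of_mem (Finset.mem_coe.2 hp)]
    refine ⟨q - p, fun r hr => ?_⟩
    have hD := hcon p hp q hq r (Finset.mem_coe.1 hr)
    have hqp : q - p ≠ 0 := sub_ne_zero.2 (Ne.symm hpq)
    obtain ⟨k, hk⟩ := parallel_of_det2 hqp hD
    exact ⟨k, by rw [← hk]; simp⟩
  · push_neg at hpair
    rcases Finset.eq_empty_or_nonempty S with rfl | ⟨p, hp⟩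
    · simpa using collinear_empty ℝ Pt
    · have hsub : (S : Set Pt) ⊆ {p} := by
        intro x hx
        simp only [Set.mem_singleton_iff]
        exact hpair x (Finset.mem_coe.1 hx) p hp
      exact Collinear.subset hsub (collinear_singleton ℝ p)

/-- A lexicographically maximal point is never in the open segment of two points of `S`. -/
lemma lexmax_not_in_segment {S : Finset Pt} {h : Pt}
    (hm1 : ∀ p ∈ S, p.1 ≤ h.1) (hm2 : ∀ p ∈ S, p.1 = h.1 → p.2 ≤ h.2)
    {x y : Pt} (hx : x ∈ S) (hy : y ∈ S) (hxy : x ≠ y) :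
    h ∉ openSegment ℝ x y := by
  intro hmem
  obtain ⟨t, ht0, ht1, heq⟩ := mem_openSegment_iff.1 hmem
  have h1 : h.1 = x.1 + t * (y.1 - x.1) := by
    rw [heq]; simp [Prod.fst_add, Prod.smul_fst, Prod.fst_sub, smul_eq_mul]
  have h2 : h.2 = x.2 + t * (y.2 - x.2) := by
    rw [heq]; simp [Prod.snd_add, Prod.smul_snd, Prod.snd_sub, smul_eq_mul]
  have hx1 : x.1 ≤ h.1 := hm1 x hx
  have hy1 : y.1 ≤ h.1 := hm1 y hy
  have hx1e : x.1 = h.1 := by nlinarith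
  have hy1e : y.1 = h.1 := by nlinarith
  have hx2 : x.2 ≤ h.2 := hm2 x hx hx1e
  have hy2 : y.2 ≤ h.2 := hm2 y hy hy1e
  have hx2e : x.2 = h.2 := by nlinarith
  have hy2e : y.2 = h.2 := by nlinarith
  exact hxy (Prod.ext (hx1e.trans hy1e.symm) (hx2e.trans hy2e.symm))

/-- Existence of a lexicographically maximal point. -/
lemma exists_lexmax {S : Finset Pt} (hS : S.Nonempty) :
    ∃ h ∈ S, (∀ p ∈ S, p.1 ≤ h.1) ∧ (∀ p ∈ S, p.1 = h.1 → p.2 ≤ h.2) := by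
  have him : (S.image Prod.fst).Nonempty := hS.image _
  set m1 := (S.image Prod.fst).max' him with hm1def
  have hm1mem : m1 ∈ S.image Prod.fst := Finset.max'_mem _ _
  have hS1 : (S.filter (fun p => p.1 = m1)).Nonempty := by
    obtain ⟨p, hp, hpeq⟩ := Finset.mem_image.1 hm1mem
    exact ⟨p, Finset.mem_filter.2 ⟨hp, hpeq⟩⟩
  have him2 : ((S.filter (fun p => p.1 = m1)).image Prod.snd).Nonempty := hS1.image _
  set m2 := ((S.filter (fun p => p.1 = m1)).image Prod.snd).max' him2 with hm2def
  have hm2mem : m2 ∈ (S.filter (fun p => p.1 = m1)).image Prod.snd := Finset.max'_mem _ _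
  obtain ⟨p, hp, hpeq⟩ := Finset.mem_image.1 hm2mem
  rw [Finset.mem_filter] at hp
  have hpmax : p = (m1, m2) := Prod.ext hp.2 hpeq
  refine ⟨(m1, m2), hpmax ▸ hp.1, fun q hq => ?_, fun q hq hq1 => ?_⟩
  · exact Finset.le_max' _ _ (Finset.mem_image_of_mem _ hq)
  · exact Finset.le_max' _ _ (Finset.mem_image_of_mem _ (Finset.mem_filter.2 ⟨hq, hq1⟩))

/-- The core induction step. `h` is a lexicographically maximal point belonging to `A`. -/
lemma bivis_core (A B : Finset Pt) (h : Pt) (hA : h ∈ A) (hd : Disjoint A B)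
    (hm1 : ∀ p ∈ A ∪ B, p.1 ≤ h.1) (hm2 : ∀ p ∈ A ∪ B, p.1 = h.1 → p.2 ≤ h.2)
    (hdet : ∃ p ∈ A ∪ B, ∃ q ∈ A ∪ B, ∃ r ∈ A ∪ B, det2 (q - p) (r - p) ≠ 0)
    (hni : ∀ x ∈ A ∪ B, ∃ y, BivisAdj A B x y)
    (ih : ∀ A' B' : Finset Pt, (A' ∪ B').card < (A ∪ B).card → Disjoint A' B' →
      (∃ p ∈ A' ∪ B', ∃ q ∈ A' ∪ B', ∃ r ∈ A' ∪ B', det2 (q - p) (r - p) ≠ 0) →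
      (∀ x ∈ A' ∪ B', ∃ y, BivisAdj A' B' x y) →
      ∀ x ∈ A' ∪ B', ∀ y ∈ A' ∪ B', Relation.ReflTransGen (BivisAdj A' B') x y) :
    ∀ x ∈ A ∪ B, ∀ y ∈ A ∪ B, Relation.ReflTransGen (BivisAdj A B) x y := by
  have hSh : h ∈ A ∪ B := Finset.mem_union_left _ hA
  have hnB : h ∉ B := Finset.disjoint_left.1 hd hA
  have crossAB : ∀ x y : Pt, BivisAdj A B x y → x ∈ A → y ∈ B := by
    intro x y hadj hxA
    rcases hadj.2.1 with ⟨-, h2⟩ | ⟨h1, -⟩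
    · exact h2
    · exact absurd h1 (Finset.disjoint_left.1 hd hxA)
  have hG1 : ∀ x ∈ A ∪ B, ∀ y ∈ A ∪ B, x ≠ y → h ∉ openSegment ℝ x y :=
    fun x hx y hy hxy => lexmax_not_in_segment hm1 hm2 hx hy hxy
  suffices Rh : ∀ x ∈ A ∪ B, Relation.ReflTransGen (BivisAdj A B) x h by
    intro x hx y hy
    exact (Rh x hx).trans (rtg_symm (fun a b hab => adj_symm hab) (Rh y hy))
  by_cases hC : ∀ p ∈ (A ∪ B).erase h, ∀ q ∈ (A ∪ B).erase h, ∀ r ∈ (A ∪ B).erase h,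
      det2 (q - p) (r - p) = 0
  · -- Case A : all points other than h are collinear; then h sees everybody.
    have visH : ∀ x ∈ A ∪ B, x ≠ h → ∀ p ∈ A ∪ B, p ∉ openSegment ℝ h x := by
      intro x hxS hxh p hpS hpseg
      obtain ⟨t, ht0, ht1, hpeq⟩ := mem_openSegment_iff.1 hpseg
      have hxhne : x - h ≠ 0 := sub_ne_zero.2 hxh
      have hph : p ≠ h := by
        intro hc
        rw [hc] at hpeq
        rw [left_eq_add] at hpeq
        rcases smul_eq_zero.1 hpeq with h0 | h0
        · exact (ne_of_gt ht0) h0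
        · exact hxhne h0
      have hpx : p ≠ x := by
        intro hc
        rw [hc] at hpeq
        have h1 : x - h = t • (x - h) := by nth_rewrite 1 [hpeq]; abel
        have h0 : (1 - t) • (x - h) = 0 := by
          rw [sub_smul, one_smul]; exact sub_eq_zero.2 h1
        rcases smul_eq_zero.1 h0 with h0' | h0'
        · linarith
        · exact hxhne h0'
      have hd0 : x - p ≠ 0 := fun h0 => hpx (by rw [sub_eq_zero] at h0; exact h0.symm)
      have hall : ∀ w ∈ A ∪ B, det2 (x - p) (w - p) = 0 := by
        intro w hwS
        by_cases hwh : w = h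
        · rw [hwh]
          have hxp : x - p = (1 - t) • (x - h) := by rw [hpeq]; module
          have hwp : h - p = (-t) • (x - h) := by rw [hpeq]; module
          rw [hxp, hwp, det2_smul_left, det2_smul_right, det2_self]
          ring
        · exact hC p (Finset.mem_erase.2 ⟨hph, hpS⟩) x (Finset.mem_erase.2 ⟨hxh, hxS⟩)
            w (Finset.mem_erase.2 ⟨hwh, hwS⟩)
      exact all_online_contra hd0 hall hdet
    intro x hxS
    by_cases hxh : x = h
    · subst hxh; exact .refl
    rcases Finset.mem_union.1 hxS with hxA | hxB
    · obtain ⟨y, hadj⟩ := hni x hxS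
      have hyB : y ∈ B := crossAB x y hadj hxA
      have hyS : y ∈ A ∪ B := (adj_mem hadj).2
      have hyh : y ≠ h := fun hc => hnB (hc ▸ hyB)
      have hadjyh : BivisAdj A B y h := by
        refine adj_symm ⟨Ne.symm hyh, Or.inl ⟨hA, hyB⟩, visH y hyS hyh⟩
      exact (Relation.ReflTransGen.single hadj).tail hadjyh
    · have hadjxh : BivisAdj A B x h := by
        refine adj_symm ⟨Ne.symm hxh, Or.inl ⟨hA, hxB⟩, visH x hxS hxh⟩
      exact Relation.ReflTransGen.single hadjxh
  · -- Case B: the points other than h are not all collinear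
    have hPw : ∀ x ∈ A ∪ B, x ≠ h → ¬ (∃ y, y ≠ h ∧ BivisAdj A B x y) →
        ∀ y, BivisAdj A B x y → y = h := by
      intro x _ _ hnotPs y hadj
      by_contra hyh
      exact hnotPs ⟨y, hyh, hadj⟩
    have hWadjh : ∀ x ∈ A ∪ B, x ≠ h → (∀ y, BivisAdj A B x y → y = h) →
        BivisAdj A B x h := by
      intro x hxS _ hPwx
      obtain ⟨y, hadj⟩ := hni x hxS
      have hy := hPwx y hadj
      rwa [hy] at hadj
    have hPwB : ∀ x ∈ A ∪ B, x ≠ h → (∀ y, BivisAdj A B x y → y = h) → x ∈ B := by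
      intro x hxS hxh hPwx
      have hadj := hWadjh x hxS hxh hPwx
      rcases hadj.2.1 with ⟨-, hhB⟩ | ⟨hxB, -⟩
      · exact absurd hhB hnB
      · exact hxB
    by_cases hS2 : ∃ x ∈ A ∪ B, x ≠ h ∧ ∃ y, y ≠ h ∧ BivisAdj A B x y
    swap
    · -- (B0): every vertex other than h has h as its only neighbour
      intro x hxS
      by_cases hxh : x = h
      · subst hxh; exact .refl
      · have hPwx : ∀ y, BivisAdj A B x y → y = h := by
          refine hPw x hxS hxh fun hPs => hS2 ⟨x, hxS, hxh, hPs⟩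
        exact Relation.ReflTransGen.single (hWadjh x hxS hxh hPwx)
    obtain ⟨t₀, ht₀S, ht₀h, r₀, hr₀h, hadj₀⟩ := hS2
    have hr₀S : r₀ ∈ A ∪ B := (adj_mem hadj₀).2
    by_cases hC2 : ∀ p ∈ (A ∪ B).filter (fun x => x ≠ h ∧ ∃ y, y ≠ h ∧ BivisAdj A B x y),
        ∀ q ∈ (A ∪ B).filter (fun x => x ≠ h ∧ ∃ y, y ≠ h ∧ BivisAdj A B x y),
        ∀ r ∈ (A ∪ B).filter (fun x => x ≠ h ∧ ∃ y, y ≠ h ∧ BivisAdj A B x y),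
        det2 (q - p) (r - p) = 0
    · -- (B2) : all points with a non-h neighbour are collinear
      have ht₀mem : t₀ ∈ (A ∪ B).filter (fun x => x ≠ h ∧ ∃ y, y ≠ h ∧ BivisAdj A B x y) :=
        Finset.mem_filter.2 ⟨ht₀S, ht₀h, r₀, hr₀h, hadj₀⟩
      have hr₀mem : r₀ ∈ (A ∪ B).filter (fun x => x ≠ h ∧ ∃ y, y ≠ h ∧ BivisAdj A B x y) :=
        Finset.mem_filter.2 ⟨hr₀S, hr₀h, t₀, ht₀h, adj_symm hadj₀⟩
      set d := r₀ - t₀ with hddef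
      have hd0 : d ≠ 0 := sub_ne_zero.2 (Ne.symm hadj₀.1)
      have honline : ∀ p ∈ A ∪ B, p ≠ h → (∃ y, y ≠ h ∧ BivisAdj A B p y) →
          det2 d (p - t₀) = 0 := by
        intro p hpS hph hPs
        exact hC2 t₀ ht₀mem r₀ hr₀mem p (Finset.mem_filter.2 ⟨hpS, hph, hPs⟩)
      have hoffne : ((A ∪ B).filter (fun p => det2 d (p - t₀) ≠ 0)).Nonempty := by
        by_contra hemp
        rw [Finset.not_nonempty_iff_eq_empty, Finset.filter_eq_empty_iff] at hemp
        exact all_online_contra hd0 (fun p hp => not_not.1 (hemp hp)) hdet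
      obtain ⟨z, hzmem, hzmin⟩ := Finset.exists_min_image _ (fun p => |det2 d (p - t₀)|) hoffne
      rw [Finset.mem_filter] at hzmem
      obtain ⟨hzS, hzdet⟩ := hzmem
      have hzmin' : ∀ p ∈ A ∪ B, det2 d (p - t₀) ≠ 0 →
          |det2 d (z - t₀)| ≤ |det2 d (p - t₀)| := by
        intro p hpS hpdet
        exact hzmin p (Finset.mem_filter.2 ⟨hpS, hpdet⟩)
      by_cases hzh : z = h
      · -- h sees the whole line; connect everything through h
        rw [hzh] at hzS hzdet hzmin'
        intro x hxS
        by_cases hxh : x = h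
        · subst hxh; exact .refl
        by_cases hPsx : ∃ y, y ≠ h ∧ BivisAdj A B x y
        · rcases Finset.mem_union.1 hxS with hxA | hxB
          · obtain ⟨y, hyh, hadj⟩ := hPsx
            have hyB : y ∈ B := crossAB x y hadj hxA
            have hyS : y ∈ A ∪ B := (adj_mem hadj).2
            have hyon : det2 d (y - t₀) = 0 := honline y hyS hyh ⟨x, hxh, adj_symm hadj⟩
            have hadjyh : BivisAdj A B y h := by
              refine ⟨hyh, Or.inr ⟨hyB, hA⟩, fun p hp hseg => ?_⟩
              exact closest_sees hzS hzdet hzmin' hyon p hp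
                (by rwa [openSegment_symm] at hseg)
            exact (Relation.ReflTransGen.single hadj).tail hadjyh
          · have hxon : det2 d (x - t₀) = 0 := honline x hxS hxh hPsx
            have hadjxh : BivisAdj A B x h := by
              refine ⟨hxh, Or.inr ⟨hxB, hA⟩, fun p hp hseg => ?_⟩
              exact closest_sees hzS hzdet hzmin' hxon p hp
                (by rwa [openSegment_symm] at hseg)
            exact Relation.ReflTransGen.single hadjxh
        · have hPwx := hPw x hxS hxh hPsx
          exact Relation.ReflTransGen.single (hWadjh x hxS hxh hPwx)
      · -- z ≠ h : impossible
        exfalso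
        have hPsz : ¬ (∃ y, y ≠ h ∧ BivisAdj A B z y) := fun hPs =>
          hzdet (honline z hzS hzh hPs)
        have hPwz := hPw z hzS hzh hPsz
        have hzB : z ∈ B := hPwB z hzS hzh hPwz
        have haside : ∃ a, a ∈ A ∧ a ∈ A ∪ B ∧ a ≠ h ∧ det2 d (a - t₀) = 0 := by
          rcases hadj₀.2.1 with ⟨ht₀A, -⟩ | ⟨-, hr₀A⟩
          · exact ⟨t₀, ht₀A, ht₀S, ht₀h, by rw [sub_self]; exact det2_zero_right d⟩
          · exact ⟨r₀, hr₀A, hr₀S, hr₀h, by rw [← hddef]; exact det2_self d⟩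
        obtain ⟨a, haA, haS, hah, haon⟩ := haside
        have hza : z ≠ a := by rintro rfl; exact hzdet haon
        have hadjza : BivisAdj A B z a :=
          ⟨hza, Or.inr ⟨hzB, haA⟩, closest_sees hzS hzdet hzmin' haon⟩
        exact hah (hPwz a hadjza)
    · -- (B1): apply the induction hypothesis to the points with a non-h neighbour
      push_neg at hC2
      obtain ⟨p₁, hp₁, q₁, hq₁, r₁, hr₁, hD₁⟩ := hC2
      set A2 := A.filter (fun x => x ≠ h ∧ ∃ y, y ≠ h ∧ BivisAdj A B x y) with hA2def
      set B2 := B.filter (fun x => x ≠ h ∧ ∃ y, y ≠ h ∧ BivisAdj A B x y) with hB2def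
      have hU : A2 ∪ B2 =
          (A ∪ B).filter (fun x => x ≠ h ∧ ∃ y, y ≠ h ∧ BivisAdj A B x y) := by
        rw [hA2def, hB2def, Finset.filter_union]
      have hd2 : Disjoint A2 B2 :=
        Finset.disjoint_filter_filter hd
      have hsubSS : (A ∪ B).filter (fun x => x ≠ h ∧ ∃ y, y ≠ h ∧ BivisAdj A B x y)
          ⊆ A ∪ B := Finset.filter_subset _ _
      have hhSS : h ∉ (A ∪ B).filter (fun x => x ≠ h ∧ ∃ y, y ≠ h ∧ BivisAdj A B x y) := by
        simp [Finset.mem_filter]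
      have hcard2 : (A2 ∪ B2).card < (A ∪ B).card := by
        rw [hU]
        exact Finset.card_lt_card ((Finset.ssubset_iff_of_subset hsubSS).2 ⟨h, hSh, hhSS⟩)
      have hdet2 : ∃ p ∈ A2 ∪ B2, ∃ q ∈ A2 ∪ B2, ∃ r ∈ A2 ∪ B2,
          det2 (q - p) (r - p) ≠ 0 := by
        rw [hU]; exact ⟨p₁, hp₁, q₁, hq₁, r₁, hr₁, hD₁⟩
      have hni2 : ∀ x ∈ A2 ∪ B2, ∃ y, BivisAdj A2 B2 x y := by
        intro x hx
        rw [hU, Finset.mem_filter] at hx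
        obtain ⟨hxS, hxh, y, hyh, hadj⟩ := hx
        have hyPs : y ≠ h ∧ ∃ y', y' ≠ h ∧ BivisAdj A B y y' :=
          ⟨hyh, x, hxh, adj_symm hadj⟩
        refine ⟨y, hadj.1, ?_, fun p hp => hadj.2.2 p ?_⟩
        · rcases hadj.2.1 with ⟨hxA, hyB⟩ | ⟨hxB, hyA⟩
          · exact Or.inl ⟨Finset.mem_filter.2 ⟨hxA, hxh, y, hyh, hadj⟩,
              Finset.mem_filter.2 ⟨hyB, hyPs⟩⟩
          · exact Or.inr ⟨Finset.mem_filter.2 ⟨hxB, hxh, y, hyh, hadj⟩,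
              Finset.mem_filter.2 ⟨hyA, hyPs⟩⟩
        · have hp' : p ∈ A2 ∪ B2 := hp
          rw [hU] at hp'
          exact hsubSS hp'
      have hrec := ih A2 B2 hcard2 hd2 hdet2 hni2
      have keylift : ∀ a b : Pt, a ∈ A → a ∈ A ∪ B → b ∈ A ∪ B → a ≠ h → a ≠ b →
          (∀ p' ∈ A ∪ B, p' ∈ openSegment ℝ a b →
            p' ∈ B ∧ (∀ y', BivisAdj A B p' y' → y' = h)) →
          ∀ p' ∈ A ∪ B, p' ∉ openSegment ℝ a b := by
        intro a b haA haS hbS hah hab hper p' hp'S hp'seg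
        exfalso
        have hne' : ((A ∪ B).filter (fun q => q ∈ openSegment ℝ a b)).Nonempty :=
          ⟨p', Finset.mem_filter.2 ⟨hp'S, hp'seg⟩⟩
        obtain ⟨z, hzS, hzseg, hzvis⟩ := exists_first_blocker hab hne'
        obtain ⟨hzB, hzPw⟩ := hper z hzS hzseg
        have hza : a ≠ z := by
          rintro rfl
          rw [left_mem_openSegment_iff] at hzseg
          exact hab hzseg
        have hadjaz : BivisAdj A B a z := ⟨hza, Or.inl ⟨haA, hzB⟩, hzvis⟩
        exact hah (hzPw a (adj_symm hadjaz))
      have lift : ∀ x y : Pt, BivisAdj A2 B2 x y → BivisAdj A B x y := by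
        intro x y hadj2
        obtain ⟨hne, hcr2, hvis2⟩ := hadj2
        have hmem2 : x ∈ A2 ∪ B2 ∧ y ∈ A2 ∪ B2 := by
          rcases hcr2 with ⟨h1, h2⟩ | ⟨h1, h2⟩
          · exact ⟨Finset.mem_union_left _ h1, Finset.mem_union_right _ h2⟩
          · exact ⟨Finset.mem_union_right _ h1, Finset.mem_union_left _ h2⟩
        have hxSS : x ∈ (A ∪ B).filter (fun x => x ≠ h ∧ ∃ y, y ≠ h ∧ BivisAdj A B x y) := by
          rw [← hU]; exact hmem2.1
        have hySS : y ∈ (A ∪ B).filter (fun x => x ≠ h ∧ ∃ y, y ≠ h ∧ BivisAdj A B x y) := by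
          rw [← hU]; exact hmem2.2
        rw [Finset.mem_filter] at hxSS hySS
        have hcross : (x ∈ A ∧ y ∈ B) ∨ (x ∈ B ∧ y ∈ A) := by
          rcases hcr2 with ⟨h1, h2⟩ | ⟨h1, h2⟩
          · exact Or.inl ⟨Finset.mem_of_mem_filter _ h1, Finset.mem_of_mem_filter _ h2⟩
          · exact Or.inr ⟨Finset.mem_of_mem_filter _ h1, Finset.mem_of_mem_filter _ h2⟩
        refine ⟨hne, hcross, fun p hpS hpseg => ?_⟩
        have perelem : ∀ p' ∈ A ∪ B, p' ∈ openSegment ℝ x y →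
            p' ∈ B ∧ (∀ y', BivisAdj A B p' y' → y' = h) := by
          intro p' hp'S hp'seg
          have hp'h : p' ≠ h := by
            rintro rfl
            exact hG1 x hxSS.1 y hySS.1 hne hp'seg
          have hp'Ps : ¬ ∃ y', y' ≠ h ∧ BivisAdj A B p' y' := by
            intro hE
            have hp'SS : p' ∈ A2 ∪ B2 := by
              rw [hU]; exact Finset.mem_filter.2 ⟨hp'S, hp'h, hE⟩
            exact hvis2 p' hp'SS hp'seg
          have hPwp' := hPw p' hp'S hp'h hp'Ps
          exact ⟨hPwB p' hp'S hp'h hPwp', hPwp'⟩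
        rcases hcross with ⟨hxA, hyB⟩ | ⟨hxB, hyA⟩
        · exact keylift x y hxA hxSS.1 hySS.1 hxSS.2.1 hne perelem p hpS hpseg
        · have hpseg' : p ∈ openSegment ℝ y x := by rwa [openSegment_symm] at hpseg
          have perelem' : ∀ p' ∈ A ∪ B, p' ∈ openSegment ℝ y x →
              p' ∈ B ∧ (∀ y', BivisAdj A B p' y' → y' = h) := by
            intro p' h1 h2
            exact perelem p' h1 (by rwa [openSegment_symm] at h2)
          exact keylift y x hyA hySS.1 hxSS.1 hySS.2.1 (Ne.symm hne) perelem' p hpS hpseg'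
      have Rpairs : ∀ x ∈ A ∪ B, x ≠ h → (∃ y, y ≠ h ∧ BivisAdj A B x y) →
          ∀ y ∈ A ∪ B, y ≠ h → (∃ y', y' ≠ h ∧ BivisAdj A B y y') →
          Relation.ReflTransGen (BivisAdj A B) x y := by
        intro x hxS hxh hPsx y hyS hyh hPsy
        have hx2 : x ∈ A2 ∪ B2 := by rw [hU]; exact Finset.mem_filter.2 ⟨hxS, hxh, hPsx⟩
        have hy2 : y ∈ A2 ∪ B2 := by rw [hU]; exact Finset.mem_filter.2 ⟨hyS, hyh, hPsy⟩
        exact Relation.ReflTransGen.mono lift _ _ (hrec x hx2 y hy2)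
      by_cases hex : ∃ y, BivisAdj A B h y ∧ y ≠ h ∧ ∃ y', y' ≠ h ∧ BivisAdj A B y y'
      · -- (B1a): h has a neighbour inside the recursive part
        obtain ⟨y₀, hadjy₀, hy₀h, hPsy₀⟩ := hex
        have hy₀S : y₀ ∈ A ∪ B := (adj_mem hadjy₀).2
        intro x hxS
        by_cases hxh : x = h
        · subst hxh; exact .refl
        by_cases hPsx : ∃ y, y ≠ h ∧ BivisAdj A B x y
        · exact (Rpairs x hxS hxh hPsx y₀ hy₀S hy₀h hPsy₀).tail (adj_symm hadjy₀)
        · exact Relation.ReflTransGen.single (hWadjh x hxS hxh (hPw x hxS hxh hPsx))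
      · -- (B1b): h is only adjacent to "private" vertices; derive a contradiction
        exfalso
        have hnbrW : ∀ y, BivisAdj A B h y → (y ∈ B ∧ ∀ y', BivisAdj A B y y' → y' = h) := by
          intro y hadj
          have hyh : y ≠ h := Ne.symm hadj.1
          have hyS : y ∈ A ∪ B := (adj_mem hadj).2
          have hyB : y ∈ B := crossAB h y hadj hA
          have hPsy : ¬ ∃ y', y' ≠ h ∧ BivisAdj A B y y' := fun hE => hex ⟨y, hadj, hyh, hE⟩
          exact ⟨hyB, hPw y hyS hyh hPsy⟩
        have ha₀ : ∃ a, a ∈ A ∧ a ∈ A ∪ B ∧ a ≠ h := by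
          rcases hadj₀.2.1 with ⟨ht₀A, -⟩ | ⟨-, hr₀A⟩
          · exact ⟨t₀, ht₀A, ht₀S, ht₀h⟩
          · exact ⟨r₀, hr₀A, hr₀S, hr₀h⟩
        obtain ⟨a₀, ha₀A, ha₀S, ha₀h⟩ := ha₀
        by_cases hP : ∃ s, BivisAdj A B h s ∧ ∃ t ∈ A, t ≠ h ∧ det2 (s - h) (t - h) ≠ 0
        swap
        · -- degenerate: all of A and all neighbours of h lie on one line through h
          push_neg at hP
          obtain ⟨s₀, hadjhs₀⟩ := hni h hSh
          have hs₀B : s₀ ∈ B := crossAB h s₀ hadjhs₀ hA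
          have hd0 : s₀ - h ≠ 0 := sub_ne_zero.2 (Ne.symm hadjhs₀.1)
          have hallA : ∀ t ∈ A, det2 (s₀ - h) (t - h) = 0 := by
            intro t htA
            by_cases hth : t = h
            · rw [hth, sub_self]; exact det2_zero_right _
            · exact hP s₀ hadjhs₀ t htA hth
          have hallN : ∀ s, BivisAdj A B h s → det2 (s₀ - h) (s - h) = 0 := by
            intro s hadj
            have h1 : det2 (s - h) (a₀ - h) = 0 := hP s hadj a₀ ha₀A ha₀h
            have h2 : det2 (s₀ - h) (a₀ - h) = 0 := hallA a₀ ha₀A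
            have ha₀ne : a₀ - h ≠ 0 := sub_ne_zero.2 ha₀h
            obtain ⟨k, hk⟩ := parallel_of_det2 hd0 h2
            have hkne : k ≠ 0 := by
              rintro rfl; rw [zero_smul] at hk; exact ha₀ne hk
            rw [hk, det2_smul_right] at h1
            have h3 : det2 (s - h) (s₀ - h) = 0 := by
              rcases mul_eq_zero.1 h1 with hc | hc
              · exact absurd hc hkne
              · exact hc
            rw [det2_comm] at h3
            linarith
          have hoffne : ((A ∪ B).filter (fun p => det2 (s₀ - h) (p - h) ≠ 0)).Nonempty := by
            by_contra hemp
            rw [Finset.not_nonempty_iff_eq_empty, Finset.filter_eq_empty_iff] at hemp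
            exact all_online_contra hd0 (fun p hp => not_not.1 (hemp hp)) hdet
          obtain ⟨z, hzmem, hzmin⟩ :=
            Finset.exists_min_image _ (fun p => |det2 (s₀ - h) (p - h)|) hoffne
          rw [Finset.mem_filter] at hzmem
          obtain ⟨hzS, hzdet⟩ := hzmem
          have hzmin' : ∀ p ∈ A ∪ B, det2 (s₀ - h) (p - h) ≠ 0 →
              |det2 (s₀ - h) (z - h)| ≤ |det2 (s₀ - h) (p - h)| := by
            intro p hpS hpdet
            exact hzmin p (Finset.mem_filter.2 ⟨hpS, hpdet⟩)
          have hzhne : z ≠ h := by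
            rintro rfl; rw [sub_self] at hzdet; exact hzdet (det2_zero_right _)
          have hzB : z ∈ B := by
            rcases Finset.mem_union.1 hzS with hzA | hzB
            · exact absurd (hallA z hzA) hzdet
            · exact hzB
          have hhon : det2 (s₀ - h) (h - h) = 0 := by rw [sub_self]; exact det2_zero_right _
          have hadjhz : BivisAdj A B h z := by
            refine ⟨Ne.symm hzhne, Or.inl ⟨hA, hzB⟩, fun p hp hseg => ?_⟩
            exact closest_sees hzS hzdet hzmin' hhon p hp (by rwa [openSegment_symm] at hseg)
          exact hzdet (hallN z hadjhz)
        · -- main case: a minimal non-degenerate triangle over a neighbour of h and a point of A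
          obtain ⟨s1, hadjs1, t1, ht1A, ht1h, hD1⟩ := hP
          have hPoolne : (((A ∪ B) ×ˢ (A ∪ B)).filter
              (fun st => BivisAdj A B h st.1 ∧ st.2 ∈ A ∧ st.2 ≠ h ∧
                det2 (st.1 - h) (st.2 - h) ≠ 0)).Nonempty := by
            refine ⟨(s1, t1), Finset.mem_filter.2 ⟨?_, hadjs1, ht1A, ht1h, hD1⟩⟩
            exact Finset.mem_product.2 ⟨(adj_mem hadjs1).2, Finset.mem_union_left _ ht1A⟩
          obtain ⟨st, hstmem, hstmin⟩ := Finset.exists_min_image _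
            (fun st : Pt × Pt => ((A ∪ B).filter (fun e => ∃ a b : ℝ,
              0 ≤ a ∧ 0 ≤ b ∧ a + b ≤ 1 ∧
              e - h = a • (st.1 - h) + b • (st.2 - h))).card) hPoolne
          obtain ⟨s, t⟩ := st
          rw [Finset.mem_filter] at hstmem
          simp only at hstmem hstmin
          obtain ⟨hstS, hadjhs, htA, hth, hD⟩ := hstmem
          have hsB : s ∈ B := crossAB h s hadjhs hA
          have hsS : s ∈ A ∪ B := (adj_mem hadjhs).2
          have htS : t ∈ A ∪ B := Finset.mem_union_left _ htA
          have Hkill : ∀ e ∈ A ∪ B, ∀ a b : ℝ, 0 < a → 0 < b → a + b ≤ 1 →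
              e - h = a • (s - h) + b • (t - h) → False := by
            intro e heS a b ha hb hab heq
            have heh : e ≠ h := by
              rintro rfl
              rw [sub_self] at heq
              obtain ⟨h1, h2⟩ := coords_zero hD heq.symm
              exact (ne_of_gt ha) h1
            obtain ⟨z, hzS, γ, hγ0, hγ1, hzeq, hzvis⟩ := exists_first_toward heS heh
            have hzcoords : z - h = (γ * a) • (s - h) + (γ * b) • (t - h) := by
              rw [hzeq, heq]; module
            have hzhne : z ≠ h := by
              intro hc
              rw [hc, sub_self] at hzeq
              rcases smul_eq_zero.1 hzeq.symm with hc' | hc'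
              · exact (ne_of_gt hγ0) hc'
              · exact (sub_ne_zero.2 heh) hc'
            have hsum : γ * (a + b) ≤ 1 := by nlinarith
            rcases Finset.mem_union.1 hzS with hzA | hzB
            · -- z ∈ A : pass to the pair (s, z)
              have hDz : det2 (s - h) (z - h) = (γ * b) * det2 (s - h) (t - h) := by
                rw [hzcoords, det2_add_right, det2_smul_right, det2_smul_right, det2_self]
                ring
              have hDz0 : det2 (s - h) (z - h) ≠ 0 := by
                rw [hDz]; exact mul_ne_zero (by positivity) hD
              have hpool : (s, z) ∈ ((A ∪ B) ×ˢ (A ∪ B)).filter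
                  (fun st => BivisAdj A B h st.1 ∧ st.2 ∈ A ∧ st.2 ≠ h ∧
                    det2 (st.1 - h) (st.2 - h) ≠ 0) :=
                Finset.mem_filter.2 ⟨Finset.mem_product.2 ⟨hsS, hzS⟩, hadjhs, hzA, hzhne, hDz0⟩
              have hsubset : (A ∪ B).filter (fun e' => ∃ a' b' : ℝ,
                  0 ≤ a' ∧ 0 ≤ b' ∧ a' + b' ≤ 1 ∧
                  e' - h = a' • (s - h) + b' • (z - h)) ⊆
                  (A ∪ B).filter (fun e' => ∃ a' b' : ℝ,
                  0 ≤ a' ∧ 0 ≤ b' ∧ a' + b' ≤ 1 ∧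
                  e' - h = a' • (s - h) + b' • (t - h)) := by
                intro e' he'
                rw [Finset.mem_filter] at he' ⊢
                obtain ⟨he'S, a', b', ha', hb', hab', he'eq⟩ := he'
                refine ⟨he'S, a' + b' * (γ * a), b' * (γ * b), by positivity, by positivity,
                  ?_, ?_⟩
                · nlinarith
                · rw [he'eq, hzcoords]; module
              have hwit : t ∈ (A ∪ B).filter (fun e' => ∃ a' b' : ℝ,
                  0 ≤ a' ∧ 0 ≤ b' ∧ a' + b' ≤ 1 ∧
                  e' - h = a' • (s - h) + b' • (t - h)) := by
                refine Finset.mem_filter.2 ⟨htS, 0, 1, le_refl _, zero_le_one, by norm_num, ?_⟩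
                module
              have hnwit : t ∉ (A ∪ B).filter (fun e' => ∃ a' b' : ℝ,
                  0 ≤ a' ∧ 0 ≤ b' ∧ a' + b' ≤ 1 ∧
                  e' - h = a' • (s - h) + b' • (z - h)) := by
                intro hmem
                rw [Finset.mem_filter] at hmem
                obtain ⟨-, a', b', ha', hb', -, heq'⟩ := hmem
                rw [hzcoords] at heq'
                have h1 : (a' + b' * (γ * a)) • (s - h) + (b' * (γ * b)) • (t - h)
                    = (0:ℝ) • (s - h) + (1:ℝ) • (t - h) := by
                  have e1 : (a' + b' * (γ * a)) • (s - h) + (b' * (γ * b)) • (t - h)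
                      = a' • (s - h) + b' • ((γ * a) • (s - h) + (γ * b) • (t - h)) := by
                    module
                  rw [e1, ← heq', zero_smul, one_smul, zero_add]
                obtain ⟨hc1, hc2⟩ := coords_unique hD h1
                have hb'pos : 0 < b' := by
                  rcases lt_or_eq_of_le hb' with hlt | heq0
                  · exact hlt
                  · exfalso; rw [← heq0] at hc2; simp at hc2
                nlinarith [mul_pos hb'pos (mul_pos hγ0 ha), hc1, ha']
              have hlt : ((A ∪ B).filter (fun e' => ∃ a' b' : ℝ,
                  0 ≤ a' ∧ 0 ≤ b' ∧ a' + b' ≤ 1 ∧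
                  e' - h = a' • (s - h) + b' • (z - h))).card <
                  ((A ∪ B).filter (fun e' => ∃ a' b' : ℝ,
                  0 ≤ a' ∧ 0 ≤ b' ∧ a' + b' ≤ 1 ∧
                  e' - h = a' • (s - h) + b' • (t - h))).card :=
                Finset.card_lt_card ((Finset.ssubset_iff_of_subset hsubset).2 ⟨_, hwit, hnwit⟩)
              have := hstmin (s, z) hpool
              simp only at this
              omega
            · -- z ∈ B : pass to the pair (z, t)
              have hadjhz : BivisAdj A B h z := ⟨Ne.symm hzhne, Or.inl ⟨hA, hzB⟩, hzvis⟩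
              have hDz : det2 (z - h) (t - h) = (γ * a) * det2 (s - h) (t - h) := by
                rw [hzcoords, det2_add_left, det2_smul_left, det2_smul_left, det2_self]
                ring
              have hDz0 : det2 (z - h) (t - h) ≠ 0 := by
                rw [hDz]; exact mul_ne_zero (by positivity) hD
              have hpool : (z, t) ∈ ((A ∪ B) ×ˢ (A ∪ B)).filter
                  (fun st => BivisAdj A B h st.1 ∧ st.2 ∈ A ∧ st.2 ≠ h ∧
                    det2 (st.1 - h) (st.2 - h) ≠ 0) :=
                Finset.mem_filter.2 ⟨Finset.mem_product.2 ⟨hzS, htS⟩, hadjhz, htA, hth, hDz0⟩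
              have hsubset : (A ∪ B).filter (fun e' => ∃ a' b' : ℝ,
                  0 ≤ a' ∧ 0 ≤ b' ∧ a' + b' ≤ 1 ∧
                  e' - h = a' • (z - h) + b' • (t - h)) ⊆
                  (A ∪ B).filter (fun e' => ∃ a' b' : ℝ,
                  0 ≤ a' ∧ 0 ≤ b' ∧ a' + b' ≤ 1 ∧
                  e' - h = a' • (s - h) + b' • (t - h)) := by
                intro e' he'
                rw [Finset.mem_filter] at he' ⊢
                obtain ⟨he'S, a', b', ha', hb', hab', he'eq⟩ := he'
                refine ⟨he'S, a' * (γ * a), a' * (γ * b) + b', by positivity, by positivity,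
                  ?_, ?_⟩
                · nlinarith
                · rw [he'eq, hzcoords]; module
              have hwit : s ∈ (A ∪ B).filter (fun e' => ∃ a' b' : ℝ,
                  0 ≤ a' ∧ 0 ≤ b' ∧ a' + b' ≤ 1 ∧
                  e' - h = a' • (s - h) + b' • (t - h)) := by
                refine Finset.mem_filter.2 ⟨hsS, 1, 0, zero_le_one, le_refl _, by norm_num, ?_⟩
                module
              have hnwit : s ∉ (A ∪ B).filter (fun e' => ∃ a' b' : ℝ,
                  0 ≤ a' ∧ 0 ≤ b' ∧ a' + b' ≤ 1 ∧
                  e' - h = a' • (z - h) + b' • (t - h)) := by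
                intro hmem
                rw [Finset.mem_filter] at hmem
                obtain ⟨-, a', b', ha', hb', -, heq'⟩ := hmem
                rw [hzcoords] at heq'
                have h1 : (a' * (γ * a)) • (s - h) + (a' * (γ * b) + b') • (t - h)
                    = (1:ℝ) • (s - h) + (0:ℝ) • (t - h) := by
                  have e1 : (a' * (γ * a)) • (s - h) + (a' * (γ * b) + b') • (t - h)
                      = a' • ((γ * a) • (s - h) + (γ * b) • (t - h)) + b' • (t - h) := by
                    module
                  rw [e1, ← heq', one_smul, zero_smul, add_zero]
                obtain ⟨hc1, hc2⟩ := coords_unique hD h1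
                have ha'pos : 0 < a' := by
                  rcases lt_or_eq_of_le ha' with hlt | heq0
                  · exact hlt
                  · exfalso; rw [← heq0] at hc1; simp at hc1
                nlinarith [mul_pos ha'pos (mul_pos hγ0 hb), hc2, hb']
              have hlt : ((A ∪ B).filter (fun e' => ∃ a' b' : ℝ,
                  0 ≤ a' ∧ 0 ≤ b' ∧ a' + b' ≤ 1 ∧
                  e' - h = a' • (z - h) + b' • (t - h))).card <
                  ((A ∪ B).filter (fun e' => ∃ a' b' : ℝ,
                  0 ≤ a' ∧ 0 ≤ b' ∧ a' + b' ≤ 1 ∧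
                  e' - h = a' • (s - h) + b' • (t - h))).card :=
                Finset.card_lt_card ((Finset.ssubset_iff_of_subset hsubset).2 ⟨_, hwit, hnwit⟩)
              have := hstmin (z, t) hpool
              simp only at this
              omega
          have hst : s ≠ t := by
            rintro rfl; exact (Finset.disjoint_left.1 hd htA) hsB
          have hvisst : ∀ p ∈ A ∪ B, p ∉ openSegment ℝ s t := by
            intro p hpS hpseg
            obtain ⟨τ, hτ0, hτ1, hpeq⟩ := mem_openSegment_iff.1 hpseg
            have hpcoords : p - h = (1 - τ) • (s - h) + τ • (t - h) := by rw [hpeq]; module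
            exact Hkill p hpS (1 - τ) τ (by linarith) hτ0 (by linarith) hpcoords
          have hadjst : BivisAdj A B s t := ⟨hst, Or.inr ⟨hsB, htA⟩, hvisst⟩
          exact hth ((hnbrW s hadjhs).2 t hadjst)

/-- Main lemma: under the hypotheses of the theorem, all points of `A ∪ B` are connected
by the bivisibility relation. -/
lemma bivis_main : ∀ n : ℕ, ∀ A B : Finset Pt, (A ∪ B).card ≤ n → Disjoint A B →
    (∃ p ∈ A ∪ B, ∃ q ∈ A ∪ B, ∃ r ∈ A ∪ B, det2 (q - p) (r - p) ≠ 0) →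
    (∀ x ∈ A ∪ B, ∃ y, BivisAdj A B x y) →
    ∀ x ∈ A ∪ B, ∀ y ∈ A ∪ B, Relation.ReflTransGen (BivisAdj A B) x y := by
  intro n
  induction n with
  | zero =>
    intro A B hcard _ hdet _
    obtain ⟨p, hp, -⟩ := hdet
    rw [Nat.le_zero, Finset.card_eq_zero] at hcard
    rw [hcard] at hp
    exact absurd hp (Finset.notMem_empty p)
  | succ n IH =>
    intro A B hcard hdis hdet hni
    have hSne : (A ∪ B).Nonempty := by obtain ⟨p, hp, -⟩ := hdet; exact ⟨p, hp⟩
    obtain ⟨h, hmem, hm1, hm2⟩ := exists_lexmax hSne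
    have ihcall : ∀ A' B' : Finset Pt, (A' ∪ B').card < (A ∪ B).card → Disjoint A' B' →
        (∃ p ∈ A' ∪ B', ∃ q ∈ A' ∪ B', ∃ r ∈ A' ∪ B', det2 (q - p) (r - p) ≠ 0) →
        (∀ x ∈ A' ∪ B', ∃ y, BivisAdj A' B' x y) →
        ∀ x ∈ A' ∪ B', ∀ y ∈ A' ∪ B', Relation.ReflTransGen (BivisAdj A' B') x y := by
      intro A' B' hlt
      exact IH A' B' (by omega)
    rcases Finset.mem_union.1 hmem with hA | hB
    · exact bivis_core A B h hA hdis hm1 hm2 hdet hni ihcall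
    · have hrev := bivis_core B A h hB hdis.symm
        (by rw [Finset.union_comm]; exact hm1) (by rw [Finset.union_comm]; exact hm2)
        (by rw [Finset.union_comm]; exact hdet)
        (by rw [Finset.union_comm]
            intro x hx
            obtain ⟨y, hy⟩ := hni x hx
            exact ⟨y, adj_swap hy⟩)
        (fun A' B' hlt => ihcall A' B' (by rwa [Finset.union_comm B A] at hlt))
      intro x hx y hy
      have := hrev x (by rwa [Finset.union_comm]) y (by rwa [Finset.union_comm])
      exact Relation.ReflTransGen.mono (fun a b hab => adj_swap hab) _ _ this

end

end BivisProof


theorem bivisibility_connected_iff_no_isolated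
    (A B : Finset (ℝ × ℝ)) (hAB : Disjoint A B)
    (hncol : ¬ Collinear ℝ ((A ∪ B : Finset (ℝ × ℝ)) : Set (ℝ × ℝ))) :
    (bivisibilityGraph A B).Connected ↔
      ∀ v : {p : ℝ × ℝ // p ∈ A ∪ B}, ∃ w, (bivisibilityGraph A B).Adj v w := by
  classical
  constructor
  · intro hconn v
    by_contra hno
    push_neg at hno
    have hex : ∃ u ∈ A ∪ B, u ≠ v.1 := by
      by_contra hall
      push_neg at hall
      apply hncol
      refine Collinear.subset ?_ (collinear_singleton ℝ v.1)
      intro x hx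
      exact hall x (Finset.mem_coe.1 hx)
    obtain ⟨u, hu, huv⟩ := hex
    obtain ⟨w⟩ := hconn.preconnected v ⟨u, hu⟩
    cases w with
    | nil => exact huv rfl
    | cons hadj _ => exact hno _ hadj
  · intro hiso
    have hdet := BivisProof.noncol_witness hncol
    have hni : ∀ x ∈ A ∪ B, ∃ y, BivisAdj A B x y := by
      intro x hx
      obtain ⟨w, hw⟩ := hiso ⟨x, hx⟩
      exact ⟨w.1, hw⟩
    have hmain := BivisProof.bivis_main (A ∪ B).card A B (le_refl _) hAB hdet hni
    have hSne : (A ∪ B).Nonempty := by obtain ⟨p, hp, -⟩ := hdet; exact ⟨p, hp⟩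
    rw [SimpleGraph.connected_iff]
    refine ⟨?_, ⟨⟨hSne.choose, hSne.choose_spec⟩⟩⟩
    intro u v
    have hR := hmain u.1 u.2 v.1 v.2
    have conv : ∀ (a b : ℝ × ℝ), Relation.ReflTransGen (BivisAdj A B) a b →
        ∀ (ha : a ∈ A ∪ B) (hb : b ∈ A ∪ B),
        (bivisibilityGraph A B).Reachable ⟨a, ha⟩ ⟨b, hb⟩ := by
      intro a b hr
      induction hr with
      | refl => intro ha hb; exact SimpleGraph.Reachable.refl _
      | @tail b c hrab hbc ihf =>
        intro ha hc
        have hbmem : b ∈ A ∪ B := (BivisProof.adj_mem hbc).1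
        exact (ihf ha hbmem).trans (SimpleGraph.Adj.reachable hbc)
    exact conv u.1 v.1 hR u.2 v.2
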